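/- Let d ≥ 2 and define the coherence-generating power C_p(U) = 1 − (1/d) Σ_{i,j} |U_{ij}|^4 of a d×d unitary and C̄ = (d−1)/(d+1). Then for any two d×d unitaries U and V, with F = P_π D a random free unitary (π uniform on S_d and D a Haar-random diagonal unitary, independent): E_F[ C_p(V F U) ] = C_p(U) + C_p(V) − C_p(U)·C_p(V)/C̄. -/

import Mathlib

open Matrix MeasureTheory
open scoped Kronecker

noncomputable section

/-- The permutation matrix of `π`: `P_π |k⟩ = |π(k)⟩`. -/
def Pm {d : ℕ} (π : Equiv.Perm (Fin d)) : Matrix (Fin d) (Fin d) ℂ :=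
  fun i j => if i = π j then 1 else 0

/-- The box `[0, 2π)^d` of phase vectors. -/
def box (d : ℕ) : Set (Fin d → ℝ) := Set.univ.pi fun _ => Set.Ico (0 : ℝ) (2 * Real.pi)

/-- The diagonal unitary `D = Σ_k e^{iφ_k} |k⟩⟨k|`. -/
def Dm {d : ℕ} (φ : Fin d → ℝ) : Matrix (Fin d) (Fin d) ℂ :=
  Matrix.diagonal fun k => Complex.exp (Complex.I * (φ k : ℂ))

/-- The linear coherence-generating power `C_p(U) = 1 − (1/d) Σ_{i,j} |U_{ij}|⁴`. -/
def Cp {d : ℕ} (U : Matrix (Fin d) (Fin d) ℂ) : ℂ :=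
  1 - (d : ℂ)⁻¹ * ∑ i : Fin d, ∑ j : Fin d, (((‖U i j‖ : ℝ) : ℂ)) ^ 4

/-- `C̄ = (d−1)/(d+1)`, the Haar-averaged coherence-generating power. -/
def Cbar (d : ℕ) : ℂ := ((d : ℂ) - 1) / ((d : ℂ) + 1)

/-! ### Auxiliary lemmas -/

lemma phase_int (n : ℤ) :
    ∫ x in Set.Ico (0:ℝ) (2*Real.pi), Complex.exp (Complex.I * n * x) =
      if n = 0 then ((2*Real.pi : ℝ) : ℂ) else 0 := by
  rw [MeasureTheory.Measure.restrict_congr_set MeasureTheory.Ico_ae_eq_Ioc,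
      ← intervalIntegral.integral_of_le (by positivity : (0:ℝ) ≤ 2*Real.pi)]
  by_cases h : n = 0
  · simp [h, mul_comm]
  · simp only [h, if_false]
    have hc : Complex.I * n ≠ 0 := by
      simp [Complex.I_ne_zero, Complex.ext_iff]
      exact_mod_cast h
    have := integral_exp_mul_complex (c := Complex.I * n) hc (a := 0) (b := 2*Real.pi)
    simp only [mul_assoc] at this ⊢
    rw [this]
    have h1 : Complex.exp (Complex.I * (n * (2*Real.pi))) = 1 := by
      rw [show Complex.I * ((n:ℂ) * (2*Real.pi)) = (n:ℂ) * (2 * Real.pi * Complex.I) by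
        ring]
      exact Complex.exp_int_mul_two_pi_mul_I n
    simp [h1]

lemma restrict_box (d : ℕ) :
    (volume : Measure (Fin d → ℝ)).restrict (Set.univ.pi fun _ => Set.Ico (0:ℝ) (2*Real.pi)) =
      Measure.pi (fun _ : Fin d => volume.restrict (Set.Ico (0:ℝ) (2*Real.pi))) := by
  haveI : ∀ i : Fin d, SigmaFinite ((volume : Measure ℝ).restrict (Set.Ico (0:ℝ) (2*Real.pi))) :=
    fun _ => inferInstance
  refine (Measure.pi_eq fun s hs => ?_).symm
  rw [Measure.restrict_apply (MeasurableSet.univ_pi hs)]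
  rw [show (Set.univ.pi s) ∩ (Set.univ.pi fun _ => Set.Ico (0:ℝ) (2*Real.pi)) =
      Set.univ.pi (fun i => s i ∩ Set.Ico (0:ℝ) (2*Real.pi)) by
    rw [← Set.pi_inter_distrib]]
  rw [volume_pi_pi]
  exact Finset.prod_congr rfl fun i _ => (Measure.restrict_apply (hs i)).symm

/-- Fubini for pi measures of sigma-finite measures on ℝ. -/
lemma integral_pi_prod {n : ℕ} (μ : Fin n → Measure ℝ) [∀ i, SigmaFinite (μ i)]
    (f : Fin n → ℝ → ℂ) :
    ∫ x, ∏ i, f i (x i) ∂(Measure.pi μ) = ∏ i, ∫ x, f i x ∂(μ i) := by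
  induction n with
  | zero => simp [Measure.pi_of_empty, measureReal_def]
  | succ n ih =>
      calc
        _ = ∫ x : ℝ × (Fin n → ℝ), f 0 x.1 * ∏ i : Fin n, f i.succ (x.2 i)
              ∂((μ 0).prod (Measure.pi fun i => μ i.succ)) := by
          rw [← ((measurePreserving_piFinSuccAbove μ 0).symm).integral_comp']
          simp only [MeasurableEquiv.piFinSuccAbove_symm_apply, Fin.insertNthEquiv,
            Fin.prod_univ_succ, Fin.insertNth_zero, Equiv.coe_fn_mk, Fin.cons_succ,
            Fin.zero_succAbove, Fin.cons_zero, cast_eq]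
        _ = (∫ x, f 0 x ∂(μ 0)) * ∏ i : Fin n, ∫ x, f i.succ x ∂(μ i.succ) := by
          have h := integral_prod_mul (μ := μ 0) (ν := Measure.pi fun j => μ j.succ)
            (f 0) (fun y : Fin n → ℝ => ∏ i : Fin n, f i.succ (y i))
          refine h.trans ?_
          congr 1
          exact ih (fun j => μ j.succ) (fun j => f j.succ)
        _ = _ := by rw [Fin.prod_univ_succ]

lemma box_phase (d : ℕ) (ν : Fin d → ℤ) :
    (∫ φ in box d, ∏ t, Complex.exp (Complex.I * ν t * φ t)) =
      if ∀ t, ν t = 0 then (((2*Real.pi)^d : ℝ) : ℂ) else 0 := by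
  rw [show (volume : Measure (Fin d → ℝ)).restrict (box d) =
      (volume : Measure (Fin d → ℝ)).restrict
        (Set.univ.pi fun _ => Set.Ico (0:ℝ) (2*Real.pi)) from rfl, restrict_box,
    integral_pi_prod (fun _ => volume.restrict (Set.Ico (0:ℝ) (2*Real.pi)))
      (fun t x => Complex.exp (Complex.I * ν t * x))]
  by_cases h : ∀ t, ν t = 0
  · rw [if_pos h]
    calc (∏ t : Fin d, ∫ x in Set.Ico (0:ℝ) (2*Real.pi), Complex.exp (Complex.I * ν t * x))
        = ∏ t : Fin d, ((2*Real.pi : ℝ) : ℂ) := by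
          refine Finset.prod_congr rfl fun t _ => ?_
          rw [phase_int, if_pos (h t)]
      _ = _ := by rw [Finset.prod_const]; push_cast; simp
  · rw [if_neg h]
    push_neg at h
    obtain ⟨t, ht⟩ := h
    apply Finset.prod_eq_zero (Finset.mem_univ t)
    rw [phase_int, if_neg ht]

lemma phase_integrable (d : ℕ) (ν : Fin d → ℤ) (c : ℂ) :
    IntegrableOn (fun φ : Fin d → ℝ => c * ∏ t, Complex.exp (Complex.I * ν t * φ t)) (box d) := by
  apply Integrable.const_mul
  have hcont : Continuous (fun φ : Fin d → ℝ => ∏ t, Complex.exp (Complex.I * ν t * φ t)) := by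
    apply continuous_finset_prod
    intro t _
    exact Complex.continuous_exp.comp
      ((continuous_const.mul (Complex.continuous_ofReal.comp (continuous_apply t))))
  haveI : IsFiniteMeasure ((volume : Measure (Fin d → ℝ)).restrict (box d)) := by
    constructor
    rw [Measure.restrict_apply_univ,
      show box d = Set.univ.pi fun _ => Set.Ico (0 : ℝ) (2 * Real.pi) from rfl, volume_pi_pi]
    exact ENNReal.prod_lt_top fun i _ => measure_Ico_lt_top
  refine Integrable.mono' (integrable_const (1:ℝ)) hcont.aestronglyMeasurable ?_
  filter_upwards with φ
  rw [norm_prod]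
  calc (∏ t : Fin d, ‖Complex.exp (Complex.I * ν t * φ t)‖)
      = ∏ t : Fin d, 1 := by
        refine Finset.prod_congr rfl fun t _ => ?_
        rw [Complex.norm_exp]
        norm_num [Complex.mul_re, Complex.mul_im]
    _ ≤ 1 := by simp

lemma perm_sum_single_const {d : ℕ} (g : Fin d → ℂ) (k k' : Fin d) :
    (∑ π : Equiv.Perm (Fin d), g (π k)) = ∑ π : Equiv.Perm (Fin d), g (π k') := by
  rw [← Equiv.sum_comp (Equiv.mulRight (Equiv.swap k k')) (fun π => g (π k'))]
  refine Finset.sum_congr rfl fun π _ => ?_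
  simp [Equiv.Perm.mul_apply]

lemma perm_sum_single {d : ℕ} (g : Fin d → ℂ) (k : Fin d) :
    (d : ℂ) * (∑ π : Equiv.Perm (Fin d), g (π k)) =
      (Nat.factorial d : ℂ) * ∑ p, g p := by
  have h2 : (∑ k' : Fin d, ∑ π : Equiv.Perm (Fin d), g (π k')) =
      (d : ℂ) * ∑ π : Equiv.Perm (Fin d), g (π k) := by
    rw [Finset.sum_congr rfl fun k' _ => perm_sum_single_const g k' k]
    simp [Finset.sum_const, mul_comm]
  rw [← h2, Finset.sum_comm]
  rw [Finset.sum_congr rfl fun (π : Equiv.Perm (Fin d)) _ => Equiv.sum_comp π g]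
  simp [Finset.sum_const, Fintype.card_perm, mul_comm]

lemma perm_sum_pair_const {d : ℕ} (h : Fin d → Fin d → ℂ) (k m k' m' : Fin d)
    (hkm : k ≠ m) (hkm' : k' ≠ m') :
    (∑ π : Equiv.Perm (Fin d), h (π k) (π m)) =
      ∑ π : Equiv.Perm (Fin d), h (π k') (π m') := by
  set σ₁ := Equiv.swap k' k with hσ₁
  set m₁ := σ₁ m' with hm₁
  have hm₁k : m₁ ≠ k := by
    intro hc
    apply hkm'
    apply σ₁.injective
    rw [Equiv.swap_apply_left, ← hc]
  set σ₂ := Equiv.swap m₁ m with hσ₂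
  set σ := σ₂ * σ₁ with hσ
  have hσk : σ k' = k := by
    simp only [hσ, Equiv.Perm.mul_apply, hσ₁, Equiv.swap_apply_left]
    exact Equiv.swap_apply_of_ne_of_ne hm₁k.symm hkm
  have hσm : σ m' = m := by
    simp only [hσ, Equiv.Perm.mul_apply, ← hm₁, hσ₂, Equiv.swap_apply_left]
  rw [← Equiv.sum_comp (Equiv.mulRight σ) (fun π => h (π k') (π m'))]
  refine Finset.sum_congr rfl fun π _ => ?_
  simp [Equiv.Perm.mul_apply, hσk, hσm]

lemma perm_sum_pair {d : ℕ} (h : Fin d → Fin d → ℂ) (k m : Fin d) (hkm : k ≠ m) :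
    ((d : ℂ)^2 - d) * (∑ π : Equiv.Perm (Fin d), h (π k) (π m)) =
      (Nat.factorial d : ℂ) * ∑ p, ∑ q, (if p = q then 0 else h p q) := by
  have side1 : (∑ k' : Fin d, ∑ m' : Fin d, if k' = m' then 0 else
      (∑ π : Equiv.Perm (Fin d), h (π k') (π m'))) =
      ((d:ℂ)^2 - d) * ∑ π : Equiv.Perm (Fin d), h (π k) (π m) := by
    have step : ∀ k' m' : Fin d, (if k' = m' then 0 else
        (∑ π : Equiv.Perm (Fin d), h (π k') (π m'))) =
        (if k' = m' then (0:ℂ) else 1) * (∑ π : Equiv.Perm (Fin d), h (π k) (π m)) := by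
      intro k' m'
      by_cases hc : k' = m'
      · simp [hc]
      · rw [if_neg hc, if_neg hc, one_mul, perm_sum_pair_const h k' m' k m hc hkm]
    rw [Finset.sum_congr rfl fun k' _ => Finset.sum_congr rfl fun m' _ => step k' m']
    simp only [← Finset.sum_mul]
    congr 1
    have : ∀ k' : Fin d, (∑ m' : Fin d, if k' = m' then (0:ℂ) else 1) = (d:ℂ) - 1 := by
      intro k'
      have : (∑ m' : Fin d, if k' = m' then (0:ℂ) else 1) =
          (∑ m' : Fin d, (1 - if k' = m' then (1:ℂ) else 0)) :=
        Finset.sum_congr rfl fun m' _ => by split_ifs <;> ring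
      rw [this, Finset.sum_sub_distrib, Finset.sum_ite_eq]
      simp
    rw [Finset.sum_congr rfl fun k' _ => this k']
    simp [Finset.sum_const]
    ring
  have side2 : (∑ k' : Fin d, ∑ m' : Fin d, if k' = m' then 0 else
      (∑ π : Equiv.Perm (Fin d), h (π k') (π m'))) =
      (Nat.factorial d : ℂ) * ∑ p, ∑ q, (if p = q then 0 else h p q) := by
    have swap1 : ∀ k' m' : Fin d, (if k' = m' then 0 else
        (∑ π : Equiv.Perm (Fin d), h (π k') (π m'))) =
        ∑ π : Equiv.Perm (Fin d), (if π k' = π m' then 0 else h (π k') (π m')) := by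
      intro k' m'
      by_cases hc : k' = m'
      · simp [hc]
      · rw [if_neg hc]
        refine Finset.sum_congr rfl fun π _ => ?_
        rw [if_neg (fun hc2 => hc (π.injective hc2))]
    rw [Finset.sum_congr rfl fun k' _ => Finset.sum_congr rfl fun m' _ => swap1 k' m']
    rw [Finset.sum_congr rfl fun k' _ => Finset.sum_comm]
    rw [Finset.sum_comm]
    have reindex : ∀ π : Equiv.Perm (Fin d),
        (∑ k' : Fin d, ∑ m' : Fin d, if π k' = π m' then 0 else h (π k') (π m')) =
        ∑ p, ∑ q, (if p = q then 0 else h p q) := by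
      intro π
      rw [← Equiv.sum_comp π (fun p => ∑ q, if p = q then (0:ℂ) else h p q)]
      exact Finset.sum_congr rfl fun k' _ =>
        Equiv.sum_comp π (fun q => if π k' = q then (0:ℂ) else h (π k') q)
    rw [Finset.sum_congr rfl fun π _ => reindex π]
    simp [Finset.sum_const, Fintype.card_perm]
  rw [← side1, side2]

def nu {d : ℕ} (k l m n : Fin d) : Fin d → ℤ := fun t =>
  (if t = k then 1 else 0) + (if t = m then 1 else 0)
    - (if t = l then 1 else 0) - (if t = n then 1 else 0)

lemma nu_zero_iff {d : ℕ} (k l m n : Fin d) :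
    (∀ t, nu k l m n t = 0) ↔ ((k = l ∧ m = n) ∨ (k = n ∧ m = l)) := by
  constructor
  · intro h
    have hk := h k
    have hm := h m
    have hl := h l
    have hn := h n
    unfold nu at hk hm hl hn
    by_cases h1 : k = l <;> by_cases h2 : m = n <;> by_cases h3 : k = n <;>
      by_cases h4 : m = l <;> by_cases h5 : k = m <;> simp_all <;> omega
  · rintro (⟨rfl, rfl⟩ | ⟨rfl, rfl⟩) t <;> unfold nu <;> split_ifs <;> omega

lemma quad_sum {d : ℕ} (w : Fin d → ℂ) :
    (∑ k, ∑ m, ∑ l, ∑ n, ((w k * (starRingEnd ℂ) (w l)) * (w m * (starRingEnd ℂ) (w n))) *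
      (if (k = l ∧ m = n) ∨ (k = n ∧ m = l) then (1:ℂ) else 0)) =
      2 * (∑ k, w k * (starRingEnd ℂ) (w k))^2 - ∑ k, (w k * (starRingEnd ℂ) (w k))^2 := by
  have inner : ∀ k m : Fin d,
      (∑ l, ∑ n, ((w k * (starRingEnd ℂ) (w l)) * (w m * (starRingEnd ℂ) (w n))) *
        (if (k = l ∧ m = n) ∨ (k = n ∧ m = l) then (1:ℂ) else 0)) =
      (w k * (starRingEnd ℂ) (w k)) * (w m * (starRingEnd ℂ) (w m)) +
        (w k * (starRingEnd ℂ) (w k)) * (w m * (starRingEnd ℂ) (w m)) -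
        (if m = k then (w k * (starRingEnd ℂ) (w k)) * (w m * (starRingEnd ℂ) (w m)) else 0) := by
    intro k m
    by_cases hmk : m = k
    · subst hmk
      have : ∀ l n : Fin d, (if (m = l ∧ m = n) ∨ (m = n ∧ m = l) then (1:ℂ) else 0) =
          (if l = m then 1 else 0) * (if n = m then 1 else 0) := by
        intro l n
        by_cases h1 : l = m <;> by_cases h2 : n = m <;> simp_all [eq_comm]
      simp only [this]
      simp [Finset.mul_sum, Finset.sum_ite_eq', mul_ite, ite_mul, mul_zero, zero_mul, mul_one]
    · have : ∀ l n : Fin d, (if (k = l ∧ m = n) ∨ (k = n ∧ m = l) then (1:ℂ) else 0) =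
          (if l = k then 1 else 0) * (if n = m then 1 else 0) +
          (if l = m then 1 else 0) * (if n = k then 1 else 0) := by
        intro l n
        by_cases h1 : l = k <;> by_cases h2 : n = m <;> by_cases h3 : l = m <;>
          by_cases h4 : n = k <;> simp_all [eq_comm]
      simp only [this]
      rw [if_neg hmk]
      simp [Finset.mul_sum, Finset.sum_add_distrib, Finset.sum_ite_eq', mul_ite, ite_mul,
        mul_zero, zero_mul, mul_one, mul_add]
      ring
  rw [Finset.sum_congr rfl fun k _ => Finset.sum_congr rfl fun m _ => inner k m]
  simp only [Finset.sum_sub_distrib, Finset.sum_add_distrib, Finset.sum_ite_eq', Finset.mem_univ,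
    if_true, ← Finset.sum_mul, ← Finset.mul_sum]
  ring_nf

lemma entry_formula {d : ℕ} (U V : Matrix (Fin d) (Fin d) ℂ) (π : Equiv.Perm (Fin d))
    (φ : Fin d → ℝ) (i j : Fin d) :
    (V * (Pm π * Dm φ) * U) i j = ∑ k, V i (π k) * Complex.exp (Complex.I * φ k) * U k j := by
  have h1 : ∀ r k : Fin d, (Pm π * Dm φ) r k =
      (if r = π k then Complex.exp (Complex.I * φ k) else 0) := by
    intro r k
    rw [Dm, Matrix.mul_diagonal, Pm]
    simp [ite_mul]
  rw [Matrix.mul_apply]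
  refine Finset.sum_congr rfl fun k _ => ?_
  rw [Matrix.mul_apply]
  rw [Finset.sum_congr rfl fun r (_ : r ∈ Finset.univ) => by rw [h1 r k]]
  simp only [mul_ite, mul_zero]
  rw [Finset.sum_ite_eq' Finset.univ (π k) (fun r => V i r * Complex.exp (Complex.I * φ k))]
  simp

lemma phase_prod {d : ℕ} (φ : Fin d → ℝ) (k l m n : Fin d) :
    (∏ t, Complex.exp (Complex.I * (nu k l m n t : ℤ) * (φ t : ℝ))) =
      Complex.exp (Complex.I * φ k) * (starRingEnd ℂ) (Complex.exp (Complex.I * φ l)) *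
        (Complex.exp (Complex.I * φ m) * (starRingEnd ℂ) (Complex.exp (Complex.I * φ n))) := by
  rw [← Complex.exp_sum]
  have hconj : ∀ t : Fin d, (starRingEnd ℂ) (Complex.exp (Complex.I * φ t)) =
      Complex.exp (-(Complex.I * φ t)) := by
    intro t
    rw [← Complex.exp_conj]
    congr 1
    simp [Complex.ext_iff]
  rw [hconj, hconj, ← Complex.exp_add, ← Complex.exp_add, ← Complex.exp_add]
  congr 1
  have : ∀ t : Fin d, Complex.I * (nu k l m n t : ℤ) * (φ t : ℝ) =
      (if t = k then Complex.I * φ t else 0) + (if t = m then Complex.I * φ t else 0)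
        - (if t = l then Complex.I * φ t else 0) - (if t = n then Complex.I * φ t else 0) := by
    intro t
    unfold nu
    push_cast
    split_ifs <;> ring
  rw [Finset.sum_congr rfl fun t _ => this t]
  simp only [Finset.sum_sub_distrib, Finset.sum_add_distrib, Finset.sum_ite_eq', Finset.mem_univ,
    if_true]
  ring

lemma Cp_expand {d : ℕ} (U V : Matrix (Fin d) (Fin d) ℂ) (π : Equiv.Perm (Fin d))
    (φ : Fin d → ℝ) :
    Cp (V * (Pm π * Dm φ) * U) = 1 - (d:ℂ)⁻¹ * ∑ i, ∑ j, ∑ k, ∑ m, ∑ l, ∑ n,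
      (((V i (π k) * U k j) * (starRingEnd ℂ) (V i (π l) * U l j)) *
        ((V i (π m) * U m j) * (starRingEnd ℂ) (V i (π n) * U n j))) *
        ∏ t, Complex.exp (Complex.I * (nu k l m n t : ℤ) * (φ t : ℝ)) := by
  rw [Cp]
  congr 2
  refine Finset.sum_congr rfl fun i _ => Finset.sum_congr rfl fun j _ => ?_
  have habs : ∀ z : ℂ, (((‖z‖ : ℝ) : ℂ))^4 = (z * (starRingEnd ℂ) z)^2 := by
    intro z
    rw [Complex.mul_conj]
    norm_cast
    rw [← Complex.sq_norm]
    ring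
  rw [habs, entry_formula U V π φ i j]
  set x : Fin d → ℂ := fun k => V i (π k) * Complex.exp (Complex.I * φ k) * U k j with hx
  rw [map_sum]
  rw [Finset.sum_mul_sum Finset.univ Finset.univ x (fun l => (starRingEnd ℂ) (x l))]
  rw [sq, Finset.sum_mul_sum]
  refine Finset.sum_congr rfl fun k _ => Finset.sum_congr rfl fun m _ => ?_
  rw [Finset.sum_mul_sum]
  refine Finset.sum_congr rfl fun l _ => Finset.sum_congr rfl fun n _ => ?_
  rw [phase_prod φ k l m n]
  simp only [hx, _root_.map_mul]
  ring

lemma vol_box (d : ℕ) : (volume (box d)).toReal = (2*Real.pi)^d := by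
  rw [show box d = Set.univ.pi fun _ => Set.Ico (0 : ℝ) (2 * Real.pi) from rfl, volume_pi_pi]
  simp [Real.volume_Ico, ENNReal.toReal_pow, Real.pi_nonneg,
    ENNReal.toReal_ofReal (by positivity : (0:ℝ) ≤ 2*Real.pi)]

lemma int_Cp {d : ℕ} (U V : Matrix (Fin d) (Fin d) ℂ) (π : Equiv.Perm (Fin d)) :
    (∫ φ in box d, Cp (V * (Pm π * Dm φ) * U)) =
      (((2*Real.pi)^d : ℝ) : ℂ) * (1 - (d:ℂ)⁻¹ * ∑ i, ∑ j,
        (2 * (∑ k, (V i (π k) * U k j) * (starRingEnd ℂ) (V i (π k) * U k j))^2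
          - ∑ k, ((V i (π k) * U k j) * (starRingEnd ℂ) (V i (π k) * U k j))^2)) := by
  simp only [Cp_expand U V π]
  set coef : Fin d → Fin d → Fin d → Fin d → Fin d → Fin d → ℂ := fun i j k m l n =>
    (((V i (π k) * U k j) * (starRingEnd ℂ) (V i (π l) * U l j)) *
      ((V i (π m) * U m j) * (starRingEnd ℂ) (V i (π n) * U n j))) with hcoef
  have hterm : ∀ (i j k m l n : Fin d), IntegrableOn
      (fun φ : Fin d → ℝ => coef i j k m l n *
        ∏ t, Complex.exp (Complex.I * (nu k l m n t : ℤ) * (φ t : ℝ))) (box d) :=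
    fun i j k m l n => phase_integrable d (nu k l m n) _
  have hS : IntegrableOn (fun φ : Fin d → ℝ => ∑ i, ∑ j, ∑ k, ∑ m, ∑ l, ∑ n,
      coef i j k m l n * ∏ t, Complex.exp (Complex.I * (nu k l m n t : ℤ) * (φ t : ℝ)))
      (box d) :=
    integrable_finset_sum _ fun i _ => integrable_finset_sum _ fun j _ =>
      integrable_finset_sum _ fun k _ => integrable_finset_sum _ fun m _ =>
      integrable_finset_sum _ fun l _ => integrable_finset_sum _ fun n _ => hterm i j k m l n
  haveI : IsFiniteMeasure ((volume : Measure (Fin d → ℝ)).restrict (box d)) := by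
    constructor
    rw [Measure.restrict_apply_univ,
      show box d = Set.univ.pi fun _ => Set.Ico (0 : ℝ) (2 * Real.pi) from rfl, volume_pi_pi]
    exact ENNReal.prod_lt_top fun i _ => measure_Ico_lt_top
  rw [integral_sub (integrable_const 1) (hS.const_mul _)]
  rw [integral_const, integral_const_mul]
  rw [integral_finset_sum _ (fun i _ => integrable_finset_sum _ fun j _ =>
    integrable_finset_sum _ fun k _ => integrable_finset_sum _ fun m _ =>
    integrable_finset_sum _ fun l _ => integrable_finset_sum _ fun n _ => hterm i j k m l n)]
  have hin : ∀ i : Fin d, (∫ φ in box d, ∑ j, ∑ k, ∑ m, ∑ l, ∑ n,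
      coef i j k m l n * ∏ t, Complex.exp (Complex.I * (nu k l m n t : ℤ) * (φ t : ℝ))) =
      ∑ j, ∑ k, ∑ m, ∑ l, ∑ n, coef i j k m l n *
        (if (k = l ∧ m = n) ∨ (k = n ∧ m = l) then (((2*Real.pi)^d : ℝ) : ℂ) else 0) := by
    intro i
    rw [integral_finset_sum _ (fun j _ => integrable_finset_sum _ fun k _ =>
      integrable_finset_sum _ fun m _ => integrable_finset_sum _ fun l _ =>
      integrable_finset_sum _ fun n _ => hterm i j k m l n)]
    refine Finset.sum_congr rfl fun j _ => ?_
    rw [integral_finset_sum _ (fun k _ => integrable_finset_sum _ fun m _ =>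
      integrable_finset_sum _ fun l _ => integrable_finset_sum _ fun n _ => hterm i j k m l n)]
    refine Finset.sum_congr rfl fun k _ => ?_
    rw [integral_finset_sum _ (fun m _ => integrable_finset_sum _ fun l _ =>
      integrable_finset_sum _ fun n _ => hterm i j k m l n)]
    refine Finset.sum_congr rfl fun m _ => ?_
    rw [integral_finset_sum _ (fun l _ => integrable_finset_sum _ fun n _ => hterm i j k m l n)]
    refine Finset.sum_congr rfl fun l _ => ?_
    rw [integral_finset_sum _ (fun n _ => hterm i j k m l n)]
    refine Finset.sum_congr rfl fun n _ => ?_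
    rw [integral_const_mul, box_phase d (nu k l m n),
      if_congr (nu_zero_iff k l m n) rfl rfl]
  rw [Finset.sum_congr rfl fun i _ => hin i]
  have hpull : ∀ i j k m l n : Fin d, coef i j k m l n *
      (if (k = l ∧ m = n) ∨ (k = n ∧ m = l) then (((2*Real.pi)^d : ℝ) : ℂ) else 0) =
      (((2*Real.pi)^d : ℝ) : ℂ) * (coef i j k m l n *
        (if (k = l ∧ m = n) ∨ (k = n ∧ m = l) then (1:ℂ) else 0)) := by
    intro i j k m l n
    split_ifs <;> ring
  simp only [hpull, ← Finset.mul_sum]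
  rw [Finset.sum_congr rfl fun i _ => Finset.sum_congr rfl fun j _ => quad_sum
    (fun k => V i (π k) * U k j)]
  rw [measureReal_def, Measure.restrict_apply_univ, vol_box d]
  rw [Complex.real_smul]
  push_cast
  ring

lemma sum_factor {d : ℕ} (f g : Fin d → ℂ) (c1 c2 : ℂ) :
    (∑ i, ∑ j, (c1 * ((1 - f i) * (1 - g j)) + c2 * (f i * g j))) =
      c1 * (((d:ℂ) - ∑ i, f i) * ((d:ℂ) - ∑ j, g j)) +
        c2 * ((∑ i, f i) * (∑ j, g j)) := by
  have hpt : ∀ i j : Fin d, (c1 * ((1 - f i) * (1 - g j)) + c2 * (f i * g j)) =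
      (c1 * (1 - f i)) * (1 - g j) + (c2 * f i) * (g j) := fun i j => by ring
  rw [Finset.sum_congr rfl fun i _ => Finset.sum_congr rfl fun j _ => hpt i j]
  simp only [Finset.sum_add_distrib]
  rw [← Finset.sum_mul_sum Finset.univ Finset.univ (fun i => c1 * (1 - f i)) (fun j => 1 - g j)]
  rw [← Finset.sum_mul_sum Finset.univ Finset.univ (fun i => c2 * f i) g]
  rw [← Finset.mul_sum, ← Finset.mul_sum]
  simp only [Finset.sum_sub_distrib, Finset.sum_const, Finset.card_univ, Fintype.card_fin,
    nsmul_eq_mul, mul_one]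
  ring

lemma perm_average {d : ℕ} (hd : 2 ≤ d) (a b : Fin d → Fin d → ℂ)
    (hrow : ∀ i, (∑ p, a i p) = 1) (hcol : ∀ j, (∑ k, b k j) = 1) :
    (∑ π : Equiv.Perm (Fin d), ∑ i, ∑ j,
        (2 * (∑ k, a i (π k) * b k j)^2 - ∑ k, (a i (π k))^2 * (b k j)^2)) =
      (2 * (Nat.factorial d : ℂ) / ((d:ℂ)^2 - d)) *
          (((d:ℂ) - ∑ i, ∑ p, (a i p)^2) * ((d:ℂ) - ∑ j, ∑ k, (b k j)^2)) +
        ((Nat.factorial d : ℂ) / d) * ((∑ i, ∑ p, (a i p)^2) * (∑ j, ∑ k, (b k j)^2)) := by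
  have hd0 : (d:ℂ) ≠ 0 := Nat.cast_ne_zero.mpr (by omega)
  have hd1 : (d:ℂ) - 1 ≠ 0 := by
    rw [sub_ne_zero]
    intro h
    have : d = 1 := by exact_mod_cast h
    omega
  have hdd : (d:ℂ)^2 - d ≠ 0 := by
    have : (d:ℂ)^2 - d = d * ((d:ℂ) - 1) := by ring
    rw [this]
    exact mul_ne_zero hd0 hd1
  rw [Finset.sum_comm]
  rw [Finset.sum_congr rfl fun i (_ : i ∈ Finset.univ) => Finset.sum_comm]
  have hij : ∀ i j : Fin d, (∑ π : Equiv.Perm (Fin d),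
      (2 * (∑ k, a i (π k) * b k j)^2 - ∑ k, (a i (π k))^2 * (b k j)^2)) =
      (2 * (Nat.factorial d : ℂ) / ((d:ℂ)^2 - d)) *
          ((1 - ∑ p, (a i p)^2) * (1 - ∑ k, (b k j)^2)) +
        ((Nat.factorial d : ℂ) / d) * ((∑ p, (a i p)^2) * (∑ k, (b k j)^2)) := by
    intro i j
    have hsing : ∀ k, (∑ π : Equiv.Perm (Fin d), a i (π k) * a i (π k)) =
        (Nat.factorial d : ℂ) * (∑ p, (a i p)^2) / d := by
      intro k
      rw [eq_div_iff hd0]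
      have h1 := perm_sum_single (fun p => a i p * a i p) k
      have h2 : (∑ p, a i p * a i p) = ∑ p, (a i p)^2 :=
        Finset.sum_congr rfl fun p _ => by ring
      rw [h2] at h1
      linear_combination h1
    have hpair : ∀ k m, k ≠ m → (∑ π : Equiv.Perm (Fin d), a i (π k) * a i (π m)) =
        (Nat.factorial d : ℂ) * (1 - ∑ p, (a i p)^2) / ((d:ℂ)^2 - d) := by
      intro k m hkm
      rw [eq_div_iff hdd]
      have h1 := perm_sum_pair (fun p q => a i p * a i q) k m hkm
      have h2 : (∑ p, ∑ q, (if p = q then (0:ℂ) else a i p * a i q)) =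
          1 - ∑ p, (a i p)^2 := by
        have hpt : ∀ p q : Fin d, (if p = q then (0:ℂ) else a i p * a i q) =
            a i p * a i q - (if q = p then a i p * a i q else 0) := by
          intro p q
          by_cases h : p = q
          · simp [h]
          · rw [if_neg h, if_neg (Ne.symm h), sub_zero]
        rw [Finset.sum_congr rfl fun p _ => Finset.sum_congr rfl fun q _ => hpt p q]
        simp only [Finset.sum_sub_distrib, Finset.sum_ite_eq', Finset.mem_univ, if_true]
        rw [← Finset.sum_mul_sum Finset.univ Finset.univ (fun p => a i p) (fun q => a i q)]
        rw [hrow i]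
        simp only [mul_one]
        congr 1
        exact Finset.sum_congr rfl fun p _ => by ring
      rw [h2] at h1
      linear_combination h1
    have hsq : ∀ π : Equiv.Perm (Fin d), (∑ k, a i (π k) * b k j)^2 =
        ∑ k, ∑ m, (a i (π k) * a i (π m)) * (b k j * b m j) := by
      intro π
      rw [sq, Finset.sum_mul_sum]
      exact Finset.sum_congr rfl fun k _ => Finset.sum_congr rfl fun m _ => by ring
    rw [Finset.sum_congr rfl fun π (_ : π ∈ Finset.univ) => by rw [hsq π]]
    rw [Finset.sum_sub_distrib]
    have hD : (∑ π : Equiv.Perm (Fin d), ∑ k, (a i (π k))^2 * (b k j)^2) =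
        ((Nat.factorial d : ℂ) * (∑ p, (a i p)^2) / d) * (∑ k, (b k j)^2) := by
      rw [Finset.sum_comm]
      have : ∀ k, (∑ π : Equiv.Perm (Fin d), (a i (π k))^2 * (b k j)^2) =
          ((Nat.factorial d : ℂ) * (∑ p, (a i p)^2) / d) * (b k j)^2 := by
        intro k
        rw [← Finset.sum_mul, ← hsing k]
        congr 1
        exact Finset.sum_congr rfl fun π _ => by ring
      rw [Finset.sum_congr rfl fun k _ => this k, ← Finset.mul_sum]
    rw [hD]
    have hS : (∑ π : Equiv.Perm (Fin d), 2 * ∑ k, ∑ m,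
        (a i (π k) * a i (π m)) * (b k j * b m j)) =
        2 * ∑ k, ∑ m, (if k = m then ((Nat.factorial d : ℂ) * (∑ p, (a i p)^2) / d)
          else ((Nat.factorial d : ℂ) * (1 - ∑ p, (a i p)^2) / ((d:ℂ)^2 - d))) *
            (b k j * b m j) := by
      rw [← Finset.mul_sum, Finset.sum_comm]
      congr 1
      refine Finset.sum_congr rfl fun k _ => ?_
      rw [Finset.sum_comm]
      refine Finset.sum_congr rfl fun m _ => ?_
      rw [← Finset.sum_mul]
      congr 1
      by_cases hkm : k = m
      · rw [if_pos hkm, ← hkm]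
        exact hsing k
      · rw [if_neg hkm]
        exact hpair k m hkm
    rw [hS]
    have hsplit : (∑ k, ∑ m, (if k = m then ((Nat.factorial d : ℂ) * (∑ p, (a i p)^2) / d)
          else ((Nat.factorial d : ℂ) * (1 - ∑ p, (a i p)^2) / ((d:ℂ)^2 - d))) *
            (b k j * b m j)) =
        ((Nat.factorial d : ℂ) * (1 - ∑ p, (a i p)^2) / ((d:ℂ)^2 - d)) +
          (((Nat.factorial d : ℂ) * (∑ p, (a i p)^2) / d) -
            ((Nat.factorial d : ℂ) * (1 - ∑ p, (a i p)^2) / ((d:ℂ)^2 - d))) *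
            (∑ k, (b k j)^2) := by
      set α := (Nat.factorial d : ℂ) * (∑ p, (a i p)^2) / d with hα
      set β := (Nat.factorial d : ℂ) * (1 - ∑ p, (a i p)^2) / ((d:ℂ)^2 - d) with hβ
      have hpt : ∀ k m : Fin d, (if k = m then α else β) * (b k j * b m j) =
          β * (b k j * b m j) + (if m = k then (α - β) * (b k j * b m j) else 0) := by
        intro k m
        by_cases h : k = m
        · rw [if_pos h, if_pos h.symm]
          ring
        · rw [if_neg h, if_neg (Ne.symm h), add_zero]
      rw [Finset.sum_congr rfl fun k _ => Finset.sum_congr rfl fun m _ => hpt k m]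
      simp only [Finset.sum_add_distrib, Finset.sum_ite_eq', Finset.mem_univ, if_true]
      have hb1 : (∑ k : Fin d, ∑ m : Fin d, β * (b k j * b m j)) = β := by
        simp only [← Finset.mul_sum]
        simp [hcol j]
      have hb2 : (∑ k : Fin d, (α - β) * (b k j * b k j)) = (α - β) * ∑ k, (b k j)^2 := by
        rw [Finset.mul_sum]
        exact Finset.sum_congr rfl fun k _ => by ring
      rw [hb1, hb2]
    rw [hsplit]
    ring
  rw [Finset.sum_congr rfl fun i _ => Finset.sum_congr rfl fun j _ => hij i j]
  rw [sum_factor (fun i => ∑ p, (a i p)^2) (fun j => ∑ k, (b k j)^2)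
    (2 * (Nat.factorial d : ℂ) / ((d:ℂ)^2 - d)) ((Nat.factorial d : ℂ) / d)]

/-- **Statement 18.** Effect of a random free unitary `F = P_π D` sandwiched between
two arbitrary unitaries on the coherence-generating power:
`E_F[C_p(V F U)] = C_p(U) + C_p(V) − C_p(U)C_p(V)/C̄`. -/
theorem coherence_sandwich (d : ℕ) (hd : 2 ≤ d)
    (U V : Matrix (Fin d) (Fin d) ℂ)
    (hU : U ∈ Matrix.unitaryGroup (Fin d) ℂ) (hV : V ∈ Matrix.unitaryGroup (Fin d) ℂ) :
    ((Nat.factorial d : ℂ)⁻¹ *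
        ∑ π : Equiv.Perm (Fin d),
          ((2 * Real.pi) ^ d)⁻¹ • ∫ φ in box d, Cp (V * (Pm π * Dm φ) * U)) =
      Cp U + Cp V - Cp U * Cp V / Cbar d := by
  have hd0 : (d:ℂ) ≠ 0 := Nat.cast_ne_zero.mpr (by omega)
  have hd1 : (d:ℂ) - 1 ≠ 0 := by
    rw [sub_ne_zero]
    intro h
    have : d = 1 := by exact_mod_cast h
    omega
  have hdd : (d:ℂ)^2 - d ≠ 0 := by
    have h : (d:ℂ)^2 - d = d * ((d:ℂ) - 1) := by ring
    rw [h]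
    exact mul_ne_zero hd0 hd1
  have hdp1 : (d:ℂ) + 1 ≠ 0 := by
    have h : (d:ℂ) + 1 = ((d+1 : ℕ) : ℂ) := by push_cast; ring
    rw [h]
    exact Nat.cast_ne_zero.mpr (by omega)
  have hfact : (Nat.factorial d : ℂ) ≠ 0 := Nat.cast_ne_zero.mpr (Nat.factorial_ne_zero d)
  have hpi : (((2*Real.pi)^d : ℝ) : ℂ) ≠ 0 := by
    exact_mod_cast pow_ne_zero d (by positivity : (2*Real.pi) ≠ (0:ℝ))
  set a : Fin d → Fin d → ℂ := fun i p => V i p * (starRingEnd ℂ) (V i p) with ha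
  set b : Fin d → Fin d → ℂ := fun k j => U k j * (starRingEnd ℂ) (U k j) with hb
  have hrow : ∀ i, (∑ p, a i p) = 1 := by
    intro i
    have h := Matrix.mem_unitaryGroup_iff.mp hV
    have h2 := congrArg (fun M : Matrix (Fin d) (Fin d) ℂ => M i i) h
    simpa [Matrix.mul_apply, Matrix.star_apply, Matrix.one_apply, Complex.star_def, ha]
      using h2
  have hcol : ∀ j, (∑ k, b k j) = 1 := by
    intro j
    have h := Matrix.mem_unitaryGroup_iff'.mp hU
    have h2 := congrArg (fun M : Matrix (Fin d) (Fin d) ℂ => M j j) h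
    simpa [Matrix.mul_apply, Matrix.star_apply, Matrix.one_apply, Complex.star_def, hb,
      mul_comm] using h2
  have key : ∀ π : Equiv.Perm (Fin d),
      (((2 * Real.pi) ^ d)⁻¹ : ℝ) • (∫ φ in box d, Cp (V * (Pm π * Dm φ) * U)) =
      1 - (d:ℂ)⁻¹ * ∑ i, ∑ j,
        (2 * (∑ k, a i (π k) * b k j)^2 - ∑ k, (a i (π k))^2 * (b k j)^2) := by
    intro π
    rw [int_Cp U V π]
    have hab : ∀ (i j k : Fin d), (V i (π k) * U k j) * (starRingEnd ℂ) (V i (π k) * U k j) =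
        a i (π k) * b k j := by
      intro i j k
      simp only [ha, hb, _root_.map_mul]
      ring
    simp only [hab]
    rw [Complex.real_smul, Complex.ofReal_inv, ← mul_assoc, inv_mul_cancel₀ hpi, one_mul]
    simp only [mul_pow]
  rw [Finset.sum_congr rfl fun π (_ : π ∈ Finset.univ) => key π]
  rw [Finset.sum_sub_distrib, Finset.sum_const, Finset.card_univ, Fintype.card_perm,
    Fintype.card_fin]
  rw [← Finset.mul_sum]
  rw [perm_average hd a b hrow hcol]
  have habs : ∀ z : ℂ, (((‖z‖ : ℝ) : ℂ))^4 = (z * (starRingEnd ℂ) z)^2 := by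
    intro z
    rw [Complex.mul_conj]
    norm_cast
    rw [← Complex.sq_norm]
    ring
  have hCpU : Cp U = 1 - (d:ℂ)⁻¹ * (∑ j, ∑ k, (b k j)^2) := by
    rw [Cp]
    congr 1
    rw [Finset.sum_comm]
    exact congrArg _ (Finset.sum_congr rfl fun j _ => Finset.sum_congr rfl fun i _ => by
      rw [habs])
  have hCpV : Cp V = 1 - (d:ℂ)⁻¹ * (∑ i, ∑ p, (a i p)^2) := by
    rw [Cp]
    congr 1
    exact congrArg _ (Finset.sum_congr rfl fun i _ => Finset.sum_congr rfl fun p _ => by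
      rw [habs])
  rw [hCpU, hCpV, Cbar]
  field_simp
  ring
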